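/- Nonconvexity of USD₂: for every λ with 0 < λ < 1, the matrix D_λ = λ·𝒫(1,0,1) + (1−λ)·𝒫(1,1,0) is not equal to 𝒫(p,q,ξ) for any p,q,ξ ∈ [0,1]; consequently (by Lemma 1) D_λ ∉ USD₂, even though 𝒫(1,0,1) and 𝒫(1,1,0) both lie in USD₂. -/

import Mathlib

open Matrix
open scoped ComplexOrder

/-- A qubit state: a positive semidefinite 2×2 complex matrix with trace 1. -/
def QubitState (ρ : Matrix (Fin 2) (Fin 2) ℂ) : Prop :=
  ρ.PosSemidef ∧ ρ.trace = 1

/-- A qubit effect: a 2×2 complex matrix `E` with both `E` and `1 - E` positive semidefinite. -/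
def QubitEffect (E : Matrix (Fin 2) (Fin 2) ℂ) : Prop :=
  E.PosSemidef ∧ (1 - E).PosSemidef

/-- A realization of a 3×3 correlation matrix `P` by three qubit states, a three-outcome
qubit POVM `(M11, M21, M31)` and a two-outcome qubit POVM `(M12, M22)`. -/
def IsRealization (P : Matrix (Fin 3) (Fin 3) ℝ)
    (ρ : Fin 3 → Matrix (Fin 2) (Fin 2) ℂ)
    (M11 M21 M31 M12 M22 : Matrix (Fin 2) (Fin 2) ℂ) : Prop :=
  (∀ x, QubitState (ρ x)) ∧
  QubitEffect M11 ∧ QubitEffect M21 ∧ QubitEffect M31 ∧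
  M11 + M21 + M31 = 1 ∧
  QubitEffect M12 ∧ QubitEffect M22 ∧
  M12 + M22 = 1 ∧
  (∀ x, P x 0 = ((ρ x * M11).trace).re ∧
        P x 1 = ((ρ x * M21).trace).re ∧
        P x 2 = ((ρ x * M12).trace).re)

/-- The USD pattern of zeros and ones of the correlation matrix, Eq. (3). -/
def USDpattern (P : Matrix (Fin 3) (Fin 3) ℝ) : Prop :=
  P 0 2 = 0 ∧ P 1 1 = 0 ∧ P 1 2 = 1 ∧ P 2 0 = 0

/-- The set USD₂ of qubit USD correlations. -/
def USD2 (P : Matrix (Fin 3) (Fin 3) ℝ) : Prop :=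
  USDpattern P ∧
  ∃ ρ M11 M21 M31 M12 M22, IsRealization P ρ M11 M21 M31 M12 M22

/-- A three-outcome qubit POVM is simulable by dichotomic measurements, Eq. (1). -/
def Simulable (M11 M21 M31 : Matrix (Fin 2) (Fin 2) ℂ) : Prop :=
  ∃ p1 p2 p3 : ℝ, ∃ N11 N22 N13 : Matrix (Fin 2) (Fin 2) ℂ,
    0 ≤ p1 ∧ 0 ≤ p2 ∧ 0 ≤ p3 ∧ p1 + p2 + p3 = 1 ∧
    QubitEffect N11 ∧ QubitEffect N22 ∧ QubitEffect N13 ∧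
    M11 = p1 • N11 + p3 • N13 ∧
    M21 = p1 • (1 - N11) + p2 • N22 ∧
    M31 = p2 • (1 - N22) + p3 • (1 - N13)

/-- The set SIM₂ of simulable trichotomic qubit correlations in the minimal scenario. -/
def SIM2 (P : Matrix (Fin 3) (Fin 3) ℝ) : Prop :=
  ∃ ρ M11 M21 M31 M12 M22, IsRealization P ρ M11 M21 M31 M12 M22 ∧
    Simulable M11 M21 M31

/-- The parameterized USD correlation matrix 𝒫(p, q, ξ) of Eq. (4). -/
noncomputable def Pmat (p q ξ : ℝ) : Matrix (Fin 3) (Fin 3) ℝ :=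
  !![p * ξ,       q,           0;
     p * (1 - ξ), 0,           1;
     0,           q * (1 - ξ), ξ]

/-! ### Auxiliary lemmas -/

/-- Cayley–Hamilton for 2×2 matrices. -/
lemma aux_sq_fin_two (A : Matrix (Fin 2) (Fin 2) ℂ) :
    A * A = A.trace • A - A.det • (1 : Matrix (Fin 2) (Fin 2) ℂ) := by
  ext i j
  fin_cases i <;> fin_cases j <;>
    simp [Matrix.mul_apply, Fin.sum_univ_two, Matrix.det_fin_two, Matrix.trace_fin_two,
      Matrix.one_apply, Matrix.smul_apply, Matrix.sub_apply] <;> ring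

/-- For a 2×2 matrix `P` with vanishing determinant, `P X P = tr(P X) • P`. -/
lemma aux_pxp (P X : Matrix (Fin 2) (Fin 2) ℂ) (hdet : P.det = 0) :
    P * X * P = (P * X).trace • P := by
  rw [Matrix.det_fin_two] at hdet
  ext i j
  fin_cases i <;> fin_cases j
  · simp only [Matrix.mul_apply, Fin.sum_univ_two, Matrix.trace_fin_two, Matrix.smul_apply,
      smul_eq_mul, Fin.mk_zero, Fin.mk_one]
    linear_combination (-(X 1 1)) * hdet
  · simp only [Matrix.mul_apply, Fin.sum_univ_two, Matrix.trace_fin_two, Matrix.smul_apply,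
      smul_eq_mul, Fin.mk_zero, Fin.mk_one]
    linear_combination (X 0 1) * hdet
  · simp only [Matrix.mul_apply, Fin.sum_univ_two, Matrix.trace_fin_two, Matrix.smul_apply,
      smul_eq_mul, Fin.mk_zero, Fin.mk_one]
    linear_combination (X 1 0) * hdet
  · simp only [Matrix.mul_apply, Fin.sum_univ_two, Matrix.trace_fin_two, Matrix.smul_apply,
      smul_eq_mul, Fin.mk_zero, Fin.mk_one]
    linear_combination (-(X 0 0)) * hdet

open scoped MatrixOrder in
/-- The trace of a product of two PSD matrices is a nonnegative real, and it vanishes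
only if the product vanishes. -/
lemma aux_trace_mul_psd {A B : Matrix (Fin 2) (Fin 2) ℂ} (hA : A.PosSemidef)
    (hB : B.PosSemidef) :
    ∃ r : ℝ, 0 ≤ r ∧ (A * B).trace = (r : ℂ) ∧ (r = 0 → A * B = 0) := by
  set sA := CFC.sqrt A with hsA
  set sB := CFC.sqrt B with hsB
  have hAA : sA * sA = A := CFC.sqrt_mul_sqrt_self A hA.nonneg
  have hBB : sB * sB = B := CFC.sqrt_mul_sqrt_self B hB.nonneg
  have hAH : sAᴴ = sA := (CFC.sqrt_nonneg A).posSemidef.1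
  have hBH : sBᴴ = sB := (CFC.sqrt_nonneg B).posSemidef.1
  set C := sB * sA with hC
  have h1 : Cᴴ * C = sA * ((sB * sB) * sA) := by
    rw [hC, conjTranspose_mul, hAH, hBH]
    noncomm_ring
  have htr : (A * B).trace = (Cᴴ * C).trace := by
    rw [← hAA, ← hBB]
    rw [h1, Matrix.mul_assoc sA sA (sB * sB), Matrix.trace_mul_comm sA (sA * (sB * sB))]
    congr 1
    noncomm_ring
  have hentry : (Cᴴ * C).trace = ((∑ j, ∑ i, Complex.normSq (C i j) : ℝ) : ℂ) := by
    simp only [Matrix.trace, Matrix.diag, Matrix.mul_apply, Matrix.conjTranspose_apply]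
    push_cast
    congr 1
    ext j
    congr 1
    ext i
    rw [Complex.star_def, Complex.normSq_eq_conj_mul_self]
  refine ⟨∑ j, ∑ i, Complex.normSq (C i j), ?_, htr.trans hentry, ?_⟩
  · exact Finset.sum_nonneg fun j _ => Finset.sum_nonneg fun i _ => Complex.normSq_nonneg _
  · intro hr
    have hC0 : C = 0 := by
      ext i j
      have hall := (Finset.sum_eq_zero_iff_of_nonneg (fun j _ =>
        Finset.sum_nonneg fun i _ => Complex.normSq_nonneg _)).mp hr
      have := (Finset.sum_eq_zero_iff_of_nonneg (fun i _ => Complex.normSq_nonneg _)).mp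
        (hall j (Finset.mem_univ j)) i (Finset.mem_univ i)
      simpa using Complex.normSq_eq_zero.mp this
    have hBA : B * A = 0 := by
      rw [← hAA, ← hBB]
      calc sB * sB * (sA * sA) = sB * C * sA := by rw [hC]; noncomm_ring
      _ = 0 := by rw [hC0, Matrix.mul_zero, Matrix.zero_mul]
    have h2 : (B * A)ᴴ = 0 := by rw [hBA]; simp
    rwa [conjTranspose_mul, hA.1, hB.1] at h2

/-- Swap a vanishing product of Hermitian matrices. -/
lemma aux_swap {A B : Matrix (Fin 2) (Fin 2) ℂ} (hA : A.IsHermitian) (hB : B.IsHermitian)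
    (h : A * B = 0) : B * A = 0 := by
  have h2 := congrArg conjTranspose h
  rwa [conjTranspose_mul, hA.eq, hB.eq, conjTranspose_zero] at h2

def auxE0 : Matrix (Fin 2) (Fin 2) ℂ := !![1, 0; 0, 0]
def auxE1 : Matrix (Fin 2) (Fin 2) ℂ := !![0, 0; 0, 1]

lemma auxE0_psd : auxE0.PosSemidef := by
  have h : auxE0 = Matrix.diagonal ![1, 0] := by
    ext i j; fin_cases i <;> fin_cases j <;> simp [auxE0, Matrix.diagonal]
  rw [h]
  refine Matrix.posSemidef_diagonal_iff.mpr ?_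
  intro i; fin_cases i <;> simp

lemma auxE1_psd : auxE1.PosSemidef := by
  have h : auxE1 = Matrix.diagonal ![0, 1] := by
    ext i j; fin_cases i <;> fin_cases j <;> simp [auxE1, Matrix.diagonal]
  rw [h]
  refine Matrix.posSemidef_diagonal_iff.mpr ?_
  intro i; fin_cases i <;> simp

lemma auxE_sum : auxE0 + auxE1 = 1 := by
  rw [Matrix.one_fin_two]; ext i j; fin_cases i <;> fin_cases j <;> simp [auxE0, auxE1]

lemma aux_one_sub_E0 : 1 - auxE0 = auxE1 := by rw [← auxE_sum]; abel
lemma aux_one_sub_E1 : 1 - auxE1 = auxE0 := by rw [← auxE_sum]; abel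

lemma auxE0_eff : QubitEffect auxE0 := ⟨auxE0_psd, by rw [aux_one_sub_E0]; exact auxE1_psd⟩
lemma auxE1_eff : QubitEffect auxE1 := ⟨auxE1_psd, by rw [aux_one_sub_E1]; exact auxE0_psd⟩
lemma aux_zero_eff : QubitEffect 0 :=
  ⟨Matrix.PosSemidef.zero, by simpa using Matrix.PosSemidef.one⟩

lemma auxE0_state : QubitState auxE0 := ⟨auxE0_psd, by simp [auxE0, Matrix.trace_fin_two]⟩
lemma auxE1_state : QubitState auxE1 := ⟨auxE1_psd, by simp [auxE1, Matrix.trace_fin_two]⟩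

/-- `𝒫(1,0,1) ∈ USD₂`. -/
lemma aux_usd2_101 : USD2 (Pmat 1 0 1) := by
  constructor
  · refine ⟨by norm_num [Pmat, Matrix.vecHead, Matrix.vecTail, Matrix.cons_val_two], by norm_num [Pmat, Matrix.vecHead, Matrix.vecTail, Matrix.cons_val_two], by norm_num [Pmat, Matrix.vecHead, Matrix.vecTail, Matrix.cons_val_two], by norm_num [Pmat, Matrix.vecHead, Matrix.vecTail, Matrix.cons_val_two]⟩
  · refine ⟨![auxE0, auxE1, auxE1], auxE0, 0, auxE1, auxE1, auxE0,
      ?_, auxE0_eff, aux_zero_eff, auxE1_eff, ?_, auxE1_eff, auxE0_eff, ?_, ?_⟩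
    · intro x
      fin_cases x <;> simp only [Matrix.cons_val_zero, Matrix.cons_val_one, Matrix.head_cons, Matrix.vecHead, Matrix.vecTail] <;>
        first
          | exact auxE0_state
          | exact auxE1_state
    · rw [add_zero]; exact auxE_sum
    · rw [add_comm]; exact auxE_sum
    · intro x
      fin_cases x <;>
        refine ⟨?_, ?_, ?_⟩ <;>
          norm_num [Pmat, auxE0, auxE1, Matrix.mul_fin_two, Matrix.trace_fin_two,
            Matrix.mul_zero, Matrix.vecHead, Matrix.vecTail, Matrix.cons_val_two]

/-- `𝒫(1,1,0) ∈ USD₂`. -/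
lemma aux_usd2_110 : USD2 (Pmat 1 1 0) := by
  constructor
  · refine ⟨by norm_num [Pmat, Matrix.vecHead, Matrix.vecTail, Matrix.cons_val_two], by norm_num [Pmat, Matrix.vecHead, Matrix.vecTail, Matrix.cons_val_two], by norm_num [Pmat, Matrix.vecHead, Matrix.vecTail, Matrix.cons_val_two], by norm_num [Pmat, Matrix.vecHead, Matrix.vecTail, Matrix.cons_val_two]⟩
  · refine ⟨![auxE0, auxE1, auxE0], auxE1, auxE0, 0, auxE1, auxE0,
      ?_, auxE1_eff, auxE0_eff, aux_zero_eff, ?_, auxE1_eff, auxE0_eff, ?_, ?_⟩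
    · intro x
      fin_cases x <;> simp only [Matrix.cons_val_zero, Matrix.cons_val_one, Matrix.head_cons, Matrix.vecHead, Matrix.vecTail] <;>
        first
          | exact auxE0_state
          | exact auxE1_state
    · rw [add_zero, add_comm]; exact auxE_sum
    · rw [add_comm]; exact auxE_sum
    · intro x
      fin_cases x <;>
        refine ⟨?_, ?_, ?_⟩ <;>
          norm_num [Pmat, auxE0, auxE1, Matrix.mul_fin_two, Matrix.trace_fin_two,
            Matrix.mul_zero, Matrix.vecHead, Matrix.vecTail, Matrix.cons_val_two]

/-- The mixture admits no qubit realization. -/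
lemma aux_not_usd2 (lam : ℝ) (h0 : 0 < lam) (h1 : lam < 1) :
    ¬ USD2 (lam • Pmat 1 0 1 + (1 - lam) • Pmat 1 1 0) := by
  rintro ⟨-, ρ, M11, M21, M31, M12, M22,
    hstates, hE11, hE21, hE31, hsum1, hE12, hE22, hsum2, hP⟩
  obtain ⟨hρ0psd, hρ0tr⟩ := hstates 0
  obtain ⟨hρ1psd, hρ1tr⟩ := hstates 1
  obtain ⟨hρ2psd, hρ2tr⟩ := hstates 2
  obtain ⟨-, h01, h02⟩ := hP 0
  obtain ⟨-, h11, h12⟩ := hP 1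
  obtain ⟨-, h21, h22⟩ := hP 2
  have c01 : (lam • Pmat 1 0 1 + (1 - lam) • Pmat 1 1 0) 0 1 = 1 - lam := by
    norm_num [Pmat, Matrix.add_apply, Matrix.smul_apply, Matrix.vecHead, Matrix.vecTail]
  have c02 : (lam • Pmat 1 0 1 + (1 - lam) • Pmat 1 1 0) 0 2 = 0 := by
    norm_num [Pmat, Matrix.add_apply, Matrix.smul_apply, Matrix.vecHead, Matrix.vecTail, Matrix.cons_val_two]
  have c11 : (lam • Pmat 1 0 1 + (1 - lam) • Pmat 1 1 0) 1 1 = 0 := by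
    norm_num [Pmat, Matrix.add_apply, Matrix.smul_apply, Matrix.vecHead, Matrix.vecTail]
  have c12 : (lam • Pmat 1 0 1 + (1 - lam) • Pmat 1 1 0) 1 2 = 1 := by
    norm_num [Pmat, Matrix.add_apply, Matrix.smul_apply, Matrix.vecHead, Matrix.vecTail, Matrix.cons_val_two]
  have c21 : (lam • Pmat 1 0 1 + (1 - lam) • Pmat 1 1 0) 2 1 = 1 - lam := by
    norm_num [Pmat, Matrix.add_apply, Matrix.smul_apply, Matrix.vecHead, Matrix.vecTail, Matrix.cons_val_two]
  have c22 : (lam • Pmat 1 0 1 + (1 - lam) • Pmat 1 1 0) 2 2 = lam := by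
    norm_num [Pmat, Matrix.add_apply, Matrix.smul_apply, Matrix.vecHead, Matrix.vecTail, Matrix.cons_val_two]
  rw [c01] at h01; rw [c02] at h02; rw [c11] at h11; rw [c12] at h12
  rw [c21] at h21; rw [c22] at h22
  -- Step A : ρ0 * M12 = 0
  obtain ⟨r, hr0, hrtr, hrz⟩ := aux_trace_mul_psd hρ0psd hE12.1
  have hA1 : ρ 0 * M12 = 0 := by
    apply hrz
    have : (0 : ℝ) = r := by rw [h02, hrtr, Complex.ofReal_re]
    exact this.symm
  -- Step B : ρ1 * M21 = 0
  obtain ⟨rb, hrb0, hrbtr, hrbz⟩ := aux_trace_mul_psd hρ1psd hE21.1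
  have hB1 : ρ 1 * M21 = 0 := by
    apply hrbz
    have : (0 : ℝ) = rb := by rw [h11, hrbtr, Complex.ofReal_re]
    exact this.symm
  -- tr(ρ1 * M12) = 1
  obtain ⟨u, hu0, hutr, -⟩ := aux_trace_mul_psd hρ1psd hE12.1
  have hu1 : u = 1 := by
    have : (1 : ℝ) = u := by rw [h12, hutr, Complex.ofReal_re]
    exact this.symm
  -- Step C : ρ1 * M12 = ρ1
  obtain ⟨s, hs0, hstr, hsz⟩ := aux_trace_mul_psd hρ1psd hE12.2
  have hsub : (ρ 1 * (1 - M12)).trace = (ρ 1).trace - (ρ 1 * M12).trace := by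
    rw [Matrix.mul_sub, Matrix.mul_one, Matrix.trace_sub]
  have hs00 : s = 0 := by
    have h3 : ((s : ℂ)) = 0 := by
      rw [← hstr, hsub, hρ1tr, hutr, hu1]
      norm_num
    exact_mod_cast h3
  have hC1 : ρ 1 * M12 = ρ 1 := by
    have h4 := hsz hs00
    rw [Matrix.mul_sub, Matrix.mul_one, sub_eq_zero] at h4
    exact h4.symm
  -- Hermitian swaps
  have hM12ρ0 : M12 * ρ 0 = 0 := aux_swap hρ0psd.1 hE12.1.1 hA1
  have hM21ρ1 : M21 * ρ 1 = 0 := aux_swap hρ1psd.1 hE21.1.1 hB1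
  have hM12ρ1 : M12 * ρ 1 = ρ 1 := by
    have h5 := congrArg conjTranspose hC1
    rwa [conjTranspose_mul, hρ1psd.1.eq, hE12.1.1.eq] at h5
  -- orthogonality of ρ0 and ρ1
  have hρ01 : ρ 0 * ρ 1 = 0 := by
    rw [← hM12ρ1, ← Matrix.mul_assoc, hA1, Matrix.zero_mul]
  have hρ10 : ρ 1 * ρ 0 = 0 := aux_swap hρ0psd.1 hρ1psd.1 hρ01
  -- vanishing determinants
  have hdet0 : (ρ 0).det = 0 := by
    by_contra h
    have hinv := Matrix.nonsing_inv_mul (ρ 0) (Ne.isUnit h)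
    have h6 : ρ 1 = 0 := by
      calc ρ 1 = (ρ 0)⁻¹ * ρ 0 * ρ 1 := by rw [hinv, Matrix.one_mul]
        _ = (ρ 0)⁻¹ * (ρ 0 * ρ 1) := Matrix.mul_assoc _ _ _
        _ = 0 := by rw [hρ01, Matrix.mul_zero]
    rw [h6, Matrix.trace_zero] at hρ1tr
    exact one_ne_zero hρ1tr.symm
  have hdet1 : (ρ 1).det = 0 := by
    by_contra h
    have hinv := Matrix.nonsing_inv_mul (ρ 1) (Ne.isUnit h)
    have h6 : ρ 0 = 0 := by
      calc ρ 0 = (ρ 1)⁻¹ * ρ 1 * ρ 0 := by rw [hinv, Matrix.one_mul]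
        _ = (ρ 1)⁻¹ * (ρ 1 * ρ 0) := Matrix.mul_assoc _ _ _
        _ = 0 := by rw [hρ10, Matrix.mul_zero]
    rw [h6, Matrix.trace_zero] at hρ0tr
    exact one_ne_zero hρ0tr.symm
  -- projections
  have hproj0 : ρ 0 * ρ 0 = ρ 0 := by
    rw [aux_sq_fin_two, hρ0tr, hdet0]; simp
  have hproj1 : ρ 1 * ρ 1 = ρ 1 := by
    rw [aux_sq_fin_two, hρ1tr, hdet1]; simp
  -- ρ0 + ρ1 = 1
  have hsum : ρ 0 + ρ 1 = 1 := by
    set P := ρ 0 + ρ 1 with hPdef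
    have hPP : P * P = P := by
      rw [hPdef, Matrix.add_mul, Matrix.mul_add, Matrix.mul_add, hproj0, hproj1, hρ01, hρ10]
      abel
    have htrP : P.trace = 2 := by
      rw [hPdef, Matrix.trace_add, hρ0tr, hρ1tr]
      norm_num
    have hCH := aux_sq_fin_two P
    rw [hPP, htrP] at hCH
    have h7 : P + P.det • (1 : Matrix (Fin 2) (Fin 2) ℂ) = (2 : ℂ) • P :=
      eq_sub_iff_add_eq.mp hCH
    rw [two_smul] at h7
    have h8 : P.det • (1 : Matrix (Fin 2) (Fin 2) ℂ) = P := by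
      have := h7
      exact add_left_cancel this
    have h9 : P.det * 2 = 2 := by
      have h10 := congrArg Matrix.trace h8
      rw [Matrix.trace_smul, Matrix.trace_one, htrP] at h10
      simpa [smul_eq_mul] using h10
    have h11 : P.det = 1 := by linear_combination h9 / 2
    rw [← h8, h11, one_smul]
  have hρ1eq : ρ 1 = 1 - ρ 0 := by rw [← hsum]; abel
  -- M12 = ρ1
  have hM12 : M12 = ρ 1 := by
    calc M12 = M12 * (ρ 0 + ρ 1) := by rw [hsum, Matrix.mul_one]
      _ = M12 * ρ 0 + M12 * ρ 1 := Matrix.mul_add _ _ _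
      _ = ρ 1 := by rw [hM12ρ0, hM12ρ1, zero_add]
  -- M21 = tr(ρ0 M21) • ρ0
  have hM21a : M21 = ρ 0 * M21 * ρ 0 := by
    calc M21 = (ρ 0 + ρ 1) * M21 * (ρ 0 + ρ 1) := by rw [hsum, Matrix.one_mul, Matrix.mul_one]
      _ = (ρ 0 * M21 + ρ 1 * M21) * (ρ 0 + ρ 1) := by rw [Matrix.add_mul]
      _ = (ρ 0 * M21) * (ρ 0 + ρ 1) := by rw [hB1, add_zero]
      _ = ρ 0 * M21 * ρ 0 + ρ 0 * (M21 * ρ 1) := by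
          rw [Matrix.mul_add]; noncomm_ring
      _ = ρ 0 * M21 * ρ 0 := by rw [hM21ρ1, Matrix.mul_zero, add_zero]
  obtain ⟨v, hv0, hvtr, -⟩ := aux_trace_mul_psd hρ0psd hE21.1
  have hv1 : v = 1 - lam := by
    have : (1 - lam : ℝ) = v := by rw [h01, hvtr, Complex.ofReal_re]
    exact this.symm
  have hM21 : M21 = ((1 - lam : ℝ) : ℂ) • ρ 0 := by
    rw [hM21a, aux_pxp _ _ hdet0, hvtr, hv1]
  -- tr(ρ2 ρ0) = t, and (1-lam) t = 1-lam
  obtain ⟨t, ht0, httr, -⟩ := aux_trace_mul_psd hρ2psd hρ0psd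
  have h21' : 1 - lam = (1 - lam) * t :=
    calc 1 - lam = ((ρ 2 * M21).trace).re := h21
      _ = (1 - lam) * t := by
        rw [hM21, Matrix.mul_smul, Matrix.trace_smul, httr]
        have hcast : ((1 - lam : ℝ) : ℂ) • ((t : ℝ) : ℂ) = (((1 - lam) * t : ℝ) : ℂ) := by
          push_cast [smul_eq_mul]; ring
        rw [hcast, Complex.ofReal_re]
  have ht1 : t = 1 := by
    have hne : (1 - lam) ≠ 0 := by linarith
    have h' : (1 - lam) * t = (1 - lam) * 1 := by linarith [h21']
    exact mul_left_cancel₀ hne h'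
  -- final contradiction
  have hfin : (ρ 2 * M12).trace = 0 := by
    rw [hM12, hρ1eq, Matrix.mul_sub, Matrix.mul_one, Matrix.trace_sub, hρ2tr, httr, ht1]
    norm_num
  rw [hfin] at h22
  simp at h22
  linarith

/-- Nonconvexity of USD₂: for `0 < λ < 1`, the mixture `D_λ = λ 𝒫(1,0,1) + (1-λ) 𝒫(1,1,0)` is
not of the form `𝒫(p,q,ξ)` for any `p, q, ξ ∈ [0,1]`, hence `D_λ ∉ USD₂`, even though
`𝒫(1,0,1)` and `𝒫(1,1,0)` both lie in USD₂. -/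
theorem usd2_not_convex (lam : ℝ) (h0 : 0 < lam) (h1 : lam < 1) :
    USD2 (Pmat 1 0 1) ∧ USD2 (Pmat 1 1 0) ∧
    (∀ p q ξ : ℝ, p ∈ Set.Icc (0 : ℝ) 1 → q ∈ Set.Icc (0 : ℝ) 1 → ξ ∈ Set.Icc (0 : ℝ) 1 →
      lam • Pmat 1 0 1 + (1 - lam) • Pmat 1 1 0 ≠ Pmat p q ξ) ∧
    ¬ USD2 (lam • Pmat 1 0 1 + (1 - lam) • Pmat 1 1 0) := by
  refine ⟨aux_usd2_101, aux_usd2_110, ?_, aux_not_usd2 lam h0 h1⟩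
  intro p q ξ hp hq hξ heq
  have e1 := congrFun (congrFun heq 0) 1
  have e2 := congrFun (congrFun heq 2) 1
  have e3 := congrFun (congrFun heq 2) 2
  norm_num [Pmat, Matrix.add_apply, Matrix.smul_apply, Matrix.vecHead, Matrix.vecTail, Matrix.cons_val_two] at e1 e2 e3
  nlinarith [e1, e2, e3, h0, h1]
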